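/- Let ‖·‖ be a norm on ℝ^n with dual norm ‖y‖_* = max_{‖x‖=1}⟨x,y⟩, K a convex body, h an α_h-strongly convex function with respect to ‖·‖, and f₁,…,f_T convex functions on K with gradients ∇f_t. The mirror descent iterates x_{t+1} = argmin_{x∈K}{⟨η∇f_t(x_t), x - x_t⟩ + D_h(x‖x_t)} with constant step η satisfy Σ_{t=1}^T f_t(x_t) - Σ_{t=1}^T f_t(x*) ≤ D_h(x*‖x₀)/η + (η/(2α_h))Σ_{t=1}^T‖∇f_t(x_t)‖_*² for all x* ∈ K. -/

import Mathlib

open RealInnerProductSpace Finset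

open RealInnerProductSpace Finset

variable {n : ℕ}
local notation "E" => EuclideanSpace ℝ (Fin n)

lemma dirquot (F : EuclideanSpace ℝ (Fin n) → ℝ) (L : EuclideanSpace ℝ (Fin n) →L[ℝ] ℝ)
    (a v : EuclideanSpace ℝ (Fin n)) (hF : HasFDerivAt F L a) :
    Filter.Tendsto (fun s : ℝ => (F (a + s • v) - F a) / s)
      (nhdsWithin 0 (Set.Ioi 0)) (nhds (L v)) := by
  have hline : HasDerivAt (fun s : ℝ => a + s • v) v 0 := by
    simpa using ((hasDerivAt_id (0:ℝ)).smul_const v).const_add a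
  have hc : HasDerivAt (fun s : ℝ => F (a + s • v)) (L v) 0 := by
    have hF2 : HasFDerivAt F L (a + (0:ℝ) • v) := by simpa using hF
    exact hF2.comp_hasDerivAt 0 hline
  have := hasDerivAt_iff_tendsto_slope.mp hc
  have h2 := this.mono_left (nhdsWithin_mono 0 (by intro s hs; exact ne_of_gt hs : Set.Ioi (0:ℝ) ⊆ {(0:ℝ)}ᶜ))
  refine h2.congr (fun s => ?_)
  simp [slope, vsub_eq_sub, div_eq_inv_mul]

lemma dirquot_le (F : EuclideanSpace ℝ (Fin n) → ℝ) (L : EuclideanSpace ℝ (Fin n) →L[ℝ] ℝ)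
    (a v : EuclideanSpace ℝ (Fin n)) (hF : HasFDerivAt F L a) (M : ℝ)
    (hle : ∀ s : ℝ, s ∈ Set.Ioc (0:ℝ) 1 → (F (a + s • v) - F a) / s ≤ M) :
    L v ≤ M := by
  refine le_of_tendsto (dirquot F L a v hF) ?_
  filter_upwards [Ioc_mem_nhdsGT_of_mem (by constructor <;> norm_num : (0:ℝ) ∈ Set.Ico (0:ℝ) 1)] with s hs
  exact hle s hs

lemma dirquot_ge (F : EuclideanSpace ℝ (Fin n) → ℝ) (L : EuclideanSpace ℝ (Fin n) →L[ℝ] ℝ)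
    (a v : EuclideanSpace ℝ (Fin n)) (hF : HasFDerivAt F L a)
    (hge : ∀ s : ℝ, s ∈ Set.Ioc (0:ℝ) 1 → 0 ≤ (F (a + s • v) - F a) / s) :
    0 ≤ L v := by
  refine ge_of_tendsto (dirquot F L a v hF) ?_
  filter_upwards [Ioc_mem_nhdsGT_of_mem (by constructor <;> norm_num : (0:ℝ) ∈ Set.Ico (0:ℝ) 1)] with s hs
  exact hge s hs
open RealInnerProductSpace Finset

lemma nonnegN {n : ℕ} (N : EuclideanSpace ℝ (Fin n) → ℝ)
    (hN_add : ∀ x y, N (x + y) ≤ N x + N y)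
    (hN_smul : ∀ (c : ℝ) x, N (c • x) = |c| * N x) :
    ∀ x, 0 ≤ N x := by
  intro x
  have h0 : N 0 = 0 := by simpa using hN_smul 0 0
  have h1 : N (-x) = N x := by simpa using hN_smul (-1) x
  have := hN_add x (-x)
  simp [h0, h1] at this
  linarith

lemma norm_upper {n : ℕ} (N : EuclideanSpace ℝ (Fin n) → ℝ)
    (hN_add : ∀ x y, N (x + y) ≤ N x + N y)
    (hN_smul : ∀ (c : ℝ) x, N (c • x) = |c| * N x) :
    ∃ C : ℝ, 0 ≤ C ∧ ∀ x, N x ≤ C * ‖x‖ := by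
  classical
  set e : Fin n → EuclideanSpace ℝ (Fin n) := fun i => EuclideanSpace.single i 1 with he
  refine ⟨∑ i, N (e i), Finset.sum_nonneg fun i _ => nonnegN N hN_add hN_smul _, fun x => ?_⟩
  have hx : x = ∑ i, x i • e i := by
    have := (EuclideanSpace.basisFun (Fin n) ℝ).sum_repr x
    simpa [he, EuclideanSpace.basisFun_repr, EuclideanSpace.basisFun_apply] using this.symm
  have hsum : ∀ (s : Finset (Fin n)) (g : Fin n → EuclideanSpace ℝ (Fin n)),
      N (∑ i ∈ s, g i) ≤ ∑ i ∈ s, N (g i) := by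
    intro s g
    induction s using Finset.induction with
    | empty => simp [show N 0 = 0 by simpa using hN_smul 0 0]
    | insert _ _ hni ih =>
      rw [Finset.sum_insert hni, Finset.sum_insert hni]
      exact le_trans (hN_add _ _) (by linarith)
  calc N x = N (∑ i, x i • e i) := by rw [← hx]
    _ ≤ ∑ i, N (x i • e i) := hsum _ _
    _ = ∑ i, |x i| * N (e i) := by simp [hN_smul]
    _ ≤ ∑ i, ‖x‖ * N (e i) := by
        refine Finset.sum_le_sum fun i _ => ?_
        have h1 : |x i| ≤ ‖x‖ := by
          have := abs_real_inner_le_norm (EuclideanSpace.single i (1:ℝ)) x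
          simpa [EuclideanSpace.inner_single_left, EuclideanSpace.norm_single] using this
        exact mul_le_mul_of_nonneg_right h1 (nonnegN N hN_add hN_smul _)
    _ = (∑ i, N (e i)) * ‖x‖ := by rw [Finset.sum_mul]; exact Finset.sum_congr rfl fun i _ => mul_comm _ _

lemma norm_lower {n : ℕ} (N : EuclideanSpace ℝ (Fin n) → ℝ)
    (hN_add : ∀ x y, N (x + y) ≤ N x + N y)
    (hN_smul : ∀ (c : ℝ) x, N (c • x) = |c| * N x)
    (hN_eq_zero : ∀ x, N x = 0 ↔ x = 0) :
    ∃ c : ℝ, 0 < c ∧ ∀ x, c * ‖x‖ ≤ N x := by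
  obtain ⟨C, hC0, hC⟩ := norm_upper N hN_add hN_smul
  -- N is Lipschitz hence continuous
  have hlip : LipschitzWith (Real.toNNReal C) N := by
    refine LipschitzWith.of_dist_le_mul fun a b => ?_
    rw [Real.dist_eq, dist_eq_norm, Real.coe_toNNReal _ hC0]
    rw [abs_sub_le_iff]
    constructor
    · have h1 : N a ≤ N (a - b) + N b := by simpa using hN_add (a - b) b
      have := hC (a - b); linarith
    · have h1 : N b ≤ N (b - a) + N a := by simpa using hN_add (b - a) a
      have h2 := hC (b - a)
      rw [norm_sub_rev] at h2; linarith
  by_cases hn : ∃ x₀ : EuclideanSpace ℝ (Fin n), x₀ ≠ 0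
  · obtain ⟨x₀, hx₀⟩ := hn
    have hsne : (Metric.sphere (0 : EuclideanSpace ℝ (Fin n)) 1).Nonempty := by
      refine ⟨‖x₀‖⁻¹ • x₀, ?_⟩
      simp [norm_smul, abs_of_nonneg, inv_mul_cancel₀ (norm_ne_zero_iff.mpr hx₀)]
    obtain ⟨z, hz, hzmin⟩ := (isCompact_sphere (0 : EuclideanSpace ℝ (Fin n)) 1).exists_isMinOn
      hsne hlip.continuous.continuousOn
    have hz1 : ‖z‖ = 1 := by simpa using hz
    have hzne : z ≠ 0 := by intro hh; rw [hh] at hz1; simp at hz1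
    have hc0 : 0 < N z := lt_of_le_of_ne (nonnegN N hN_add hN_smul z)
      (fun hh => hzne ((hN_eq_zero z).mp hh.symm))
    refine ⟨N z, hc0, fun x => ?_⟩
    by_cases hx : x = 0
    · simp only [hx, norm_zero, mul_zero]
      exact nonnegN N hN_add hN_smul 0
    · have hmem : ‖x‖⁻¹ • x ∈ Metric.sphere (0 : EuclideanSpace ℝ (Fin n)) 1 := by
        simp [norm_smul, abs_of_nonneg, inv_mul_cancel₀ (norm_ne_zero_iff.mpr hx)]
      have hle : N z ≤ N (‖x‖⁻¹ • x) := hzmin hmem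
      have heq : N (‖x‖⁻¹ • x) = ‖x‖⁻¹ * N x := by
        rw [hN_smul]; congr 1; exact abs_of_nonneg (by positivity)
      have hnx : (0:ℝ) < ‖x‖ := norm_pos_iff.mpr hx
      rw [heq] at hle
      calc N z * ‖x‖ ≤ (‖x‖⁻¹ * N x) * ‖x‖ := by nlinarith [hle]
        _ = N x := by field_simp
  · push_neg at hn
    refine ⟨1, one_pos, fun x => ?_⟩
    simp [hn x, show N 0 = 0 by simpa using hN_smul 0 0]

lemma gen_cauchy {n : ℕ} (N : EuclideanSpace ℝ (Fin n) → ℝ)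
    (hN_add : ∀ x y, N (x + y) ≤ N x + N y)
    (hN_smul : ∀ (c : ℝ) x, N (c • x) = |c| * N x)
    (hN_eq_zero : ∀ x, N x = 0 ↔ x = 0)
    (Nstar : EuclideanSpace ℝ (Fin n) → ℝ)
    (hNstar : ∀ y, Nstar y = sSup {r : ℝ | ∃ x, N x = 1 ∧ r = ⟪x, y⟫}) :
    ∀ u y, ⟪u, y⟫ ≤ N u * Nstar y := by
  obtain ⟨c, hc0, hc⟩ := norm_lower N hN_add hN_smul hN_eq_zero
  intro u y
  by_cases hu : u = 0
  · simp [hu, show N 0 = 0 by simpa using hN_smul 0 0]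
  · have hNu : 0 < N u := lt_of_le_of_ne (nonnegN N hN_add hN_smul u)
      (fun hh => hu ((hN_eq_zero u).mp hh.symm))
    have hbdd : BddAbove {r : ℝ | ∃ x, N x = 1 ∧ r = ⟪x, y⟫} := by
      refine ⟨c⁻¹ * ‖y‖, fun r hr => ?_⟩
      obtain ⟨w, hw1, rfl⟩ := hr
      have h1 : c * ‖w‖ ≤ 1 := by rw [← hw1]; exact hc w
      have h2 : ⟪w, y⟫ ≤ ‖w‖ * ‖y‖ := real_inner_le_norm w y
      have h3 : ‖w‖ ≤ c⁻¹ := by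
        have h4 := mul_inv_cancel₀ (ne_of_gt hc0)
        nlinarith
      nlinarith [norm_nonneg y]
    have hmem : ⟪(N u)⁻¹ • u, y⟫ ∈ {r : ℝ | ∃ x, N x = 1 ∧ r = ⟪x, y⟫} := by
      refine ⟨(N u)⁻¹ • u, ?_, rfl⟩
      rw [hN_smul, abs_of_nonneg (by positivity), inv_mul_cancel₀ (ne_of_gt hNu)]
    have hle := le_csSup hbdd hmem
    rw [← hNstar] at hle
    rw [real_inner_smul_left] at hle
    calc ⟪u, y⟫ = N u * ((N u)⁻¹ * ⟪u, y⟫) := by field_simp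
      _ ≤ N u * Nstar y := by nlinarith

/-- Mirror descent regret bound with respect to a general norm `N` on `ℝ^n`,
with dual norm `Nstar`, mirror map `h` that is `αh`-strongly convex w.r.t. `N`,
and Bregman divergence `Dh`. -/
theorem mirror_descent_regret {n : ℕ} (T : ℕ) (hT : 0 < T)
    (N : EuclideanSpace ℝ (Fin n) → ℝ)
    (hN_add : ∀ x y, N (x + y) ≤ N x + N y)
    (hN_smul : ∀ (c : ℝ) x, N (c • x) = |c| * N x)
    (hN_eq_zero : ∀ x, N x = 0 ↔ x = 0)
    (Nstar : EuclideanSpace ℝ (Fin n) → ℝ)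
    (hNstar : ∀ y, Nstar y = sSup {r : ℝ | ∃ x, N x = 1 ∧ r = ⟪x, y⟫})
    (K : Set (EuclideanSpace ℝ (Fin n)))
    (hKclosed : IsClosed K) (hKconv : Convex ℝ K) (hKne : K.Nonempty)
    (h : EuclideanSpace ℝ (Fin n) → ℝ)
    (h' : EuclideanSpace ℝ (Fin n) → EuclideanSpace ℝ (Fin n))
    (hhdiff : ∀ x, HasGradientAt h (h' x) x)
    (αh : ℝ) (hαh : 0 < αh)
    (hsc : ∀ x y, h y ≥ h x + ⟪h' x, y - x⟫ + αh / 2 * (N (y - x)) ^ 2)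
    (Dh : EuclideanSpace ℝ (Fin n) → EuclideanSpace ℝ (Fin n) → ℝ)
    (hDh : ∀ y x, Dh y x = h y - h x - ⟪h' x, y - x⟫)
    (f : ℕ → EuclideanSpace ℝ (Fin n) → ℝ)
    (f' : ℕ → EuclideanSpace ℝ (Fin n) → EuclideanSpace ℝ (Fin n))
    (hconv : ∀ t, ConvexOn ℝ K (f t))
    (hfdiff : ∀ t x, HasGradientAt (f t) (f' t x) x)
    (η : ℝ) (hη : 0 < η)
    (x : ℕ → EuclideanSpace ℝ (Fin n)) (hx0K : x 0 ∈ K)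
    (hupdateK : ∀ t, x (t + 1) ∈ K)
    (hupdate : ∀ t, ∀ p ∈ K,
      ⟪η • f' t (x t), x (t + 1) - x t⟫ + Dh (x (t + 1)) (x t)
        ≤ ⟪η • f' t (x t), p - x t⟫ + Dh p (x t)) :
    ∀ xstar ∈ K,
      ∑ t ∈ range T, f t (x t) - ∑ t ∈ range T, f t xstar
        ≤ Dh xstar (x 0) / η
          + η / (2 * αh) * ∑ t ∈ range T, (Nstar (f' t (x t))) ^ 2 := by
  
  intro xstar hxstar
  have hxK : ∀ t, x t ∈ K := fun t => Nat.casesOn t hx0K hupdateK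
  have hCS := gen_cauchy N hN_add hN_smul hN_eq_zero Nstar hNstar
  have hDh_sc : ∀ y w, αh / 2 * (N (y - w)) ^ 2 ≤ Dh y w := by
    intro y w; rw [hDh]; have := hsc w y; linarith
  have hDh_nonneg : ∀ y w, 0 ≤ Dh y w := by
    intro y w
    refine le_trans ?_ (hDh_sc y w)
    positivity
  -- convexity first-order inequality
  have hconvIneq : ∀ t, ⟪f' t (x t), xstar - x t⟫ ≤ f t xstar - f t (x t) := by
    intro t
    have hF := hasGradientAt_iff_hasFDerivAt.mp (hfdiff t (x t))
    have hq : ∀ s : ℝ, s ∈ Set.Ioc (0:ℝ) 1 →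
        (f t (x t + s • (xstar - x t)) - f t (x t)) / s ≤ f t xstar - f t (x t) := by
      intro s hs
      obtain ⟨hs0, hs1⟩ := hs
      have hmem : x t + s • (xstar - x t) = (1 - s) • x t + s • xstar := by
        rw [smul_sub, sub_smul, one_smul]; abel
      have hcx := (hconv t).2 (hxK t) hxstar (by linarith : (0:ℝ) ≤ 1 - s)
        (le_of_lt hs0) (by ring)
      rw [div_le_iff₀ hs0, hmem]
      simp only [smul_eq_mul] at hcx
      nlinarith [hcx]
    have := dirquot_le (f t) _ (x t) (xstar - x t) hF (f t xstar - f t (x t)) hq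
    simpa [InnerProductSpace.toDual_apply_apply] using this
  -- per-step key inequality
  have key : ∀ t, f t (x t) - f t xstar
      ≤ (Dh xstar (x t) - Dh xstar (x (t + 1))) / η
        + η / (2 * αh) * (Nstar (f' t (x t))) ^ 2 := by
    intro t
    set g := f' t (x t) with hg
    -- first-order optimality of the update
    have hB : 0 ≤ ⟪η • g - h' (x t), xstar - x (t + 1)⟫
        + ⟪h' (x (t + 1)), xstar - x (t + 1)⟫ := by
      set w := η • g - h' (x t) with hw
      have hgrad := hasGradientAt_iff_hasFDerivAt.mp (hhdiff (x (t + 1)))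
      have hL : HasFDerivAt (fun p => ⟪w, p⟫ + h p)
          ((InnerProductSpace.toDual ℝ (EuclideanSpace ℝ (Fin n)) w)
            + (InnerProductSpace.toDual ℝ (EuclideanSpace ℝ (Fin n)) (h' (x (t + 1)))))
          (x (t + 1)) := by
        have h1 := (InnerProductSpace.toDual ℝ (EuclideanSpace ℝ (Fin n)) w).hasFDerivAt
          (x := x (t + 1))
        simpa [InnerProductSpace.toDual_apply_apply, Pi.add_def] using h1.add hgrad
      have hq : ∀ s : ℝ, s ∈ Set.Ioc (0:ℝ) 1 →
          0 ≤ ((fun p => ⟪w, p⟫ + h p) (x (t + 1) + s • (xstar - x (t + 1)))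
              - (fun p => ⟪w, p⟫ + h p) (x (t + 1))) / s := by
        intro s hs
        obtain ⟨hs0, hs1⟩ := hs
        apply div_nonneg _ (le_of_lt hs0)
        have hmemK : x (t + 1) + s • (xstar - x (t + 1)) ∈ K := by
          have heq : x (t + 1) + s • (xstar - x (t + 1))
              = (1 - s) • x (t + 1) + s • xstar := by
            rw [smul_sub, sub_smul, one_smul]; abel
          rw [heq]
          exact hKconv (hupdateK t) hxstar (by linarith) (le_of_lt hs0) (by ring)
        have hup := hupdate t _ hmemK
        rw [hDh, hDh] at hup
        simp only [hw, inner_sub_left, inner_sub_right, real_inner_smul_left] at hup ⊢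
        linarith
      have := dirquot_ge _ _ (x (t + 1)) (xstar - x (t + 1)) hL hq
      simpa [InnerProductSpace.toDual_apply_apply] using this
    -- three-point identity
    have hC : ⟪h' (x t) - h' (x (t + 1)), x (t + 1) - xstar⟫
        = Dh xstar (x t) - Dh xstar (x (t + 1)) - Dh (x (t + 1)) (x t) := by
      simp only [hDh, inner_sub_left, inner_sub_right]; ring
    -- Cauchy–Schwarz + AM–GM
    have hCSt : ⟪g, x t - x (t + 1)⟫ ≤ N (x t - x (t + 1)) * Nstar g := by
      rw [real_inner_comm]; exact hCS _ _
    have hD : η * ⟪g, x t - x (t + 1)⟫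
        ≤ αh / 2 * (N (x t - x (t + 1))) ^ 2 + η ^ 2 / (2 * αh) * (Nstar g) ^ 2 := by
      have h1 : η * ⟪g, x t - x (t + 1)⟫ ≤ η * (N (x t - x (t + 1)) * Nstar g) :=
        mul_le_mul_of_nonneg_left hCSt (le_of_lt hη)
      have h2 : η * (N (x t - x (t + 1)) * Nstar g)
          ≤ αh / 2 * (N (x t - x (t + 1))) ^ 2 + η ^ 2 / (2 * αh) * (Nstar g) ^ 2 := by
        rw [← sub_nonneg]
        have hexp : αh / 2 * (N (x t - x (t + 1))) ^ 2 + η ^ 2 / (2 * αh) * (Nstar g) ^ 2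
            - η * (N (x t - x (t + 1)) * Nstar g)
            = (αh * N (x t - x (t + 1)) - η * Nstar g) ^ 2 / (2 * αh) := by
          field_simp; ring
        rw [hexp]; positivity
      linarith
    -- strong convexity lower bound on Dh
    have hNsym : N (x t - x (t + 1)) = N (x (t + 1) - x t) := by
      have heq : x t - x (t + 1) = (-1 : ℝ) • (x (t + 1) - x t) := by
        rw [neg_smul, one_smul, neg_sub]
      rw [heq, hN_smul]; norm_num
    have hE : αh / 2 * (N (x t - x (t + 1))) ^ 2 ≤ Dh (x (t + 1)) (x t) := by
      rw [hNsym]; exact hDh_sc _ _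
    have hA := hconvIneq t
    have hAη := mul_le_mul_of_nonneg_left hA (le_of_lt hη)
    have hfinal : η * (f t (x t) - f t xstar)
        ≤ η ^ 2 / (2 * αh) * (Nstar g) ^ 2 + Dh xstar (x t) - Dh xstar (x (t + 1)) := by
      simp only [inner_sub_left, inner_sub_right, real_inner_smul_left] at hB hC hD hAη
      nlinarith [hB, hC, hD, hE, hAη]
    have hdiv : f t (x t) - f t xstar
        ≤ (η ^ 2 / (2 * αh) * (Nstar g) ^ 2 + Dh xstar (x t) - Dh xstar (x (t + 1))) / η := by
      rw [le_div_iff₀ hη]; nlinarith [hfinal]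
    refine le_trans hdiv (le_of_eq ?_)
    field_simp
    ring
  -- summation and telescoping
  rw [← Finset.sum_sub_distrib]
  calc ∑ t ∈ range T, (f t (x t) - f t xstar)
      ≤ ∑ t ∈ range T, ((Dh xstar (x t) - Dh xstar (x (t + 1))) / η
          + η / (2 * αh) * (Nstar (f' t (x t))) ^ 2) :=
        Finset.sum_le_sum fun t _ => key t
    _ = (∑ t ∈ range T, (Dh xstar (x t) - Dh xstar (x (t + 1)))) / η
          + η / (2 * αh) * ∑ t ∈ range T, (Nstar (f' t (x t))) ^ 2 := by
        rw [Finset.sum_add_distrib, Finset.sum_div, Finset.mul_sum]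
    _ = (Dh xstar (x 0) - Dh xstar (x T)) / η
          + η / (2 * αh) * ∑ t ∈ range T, (Nstar (f' t (x t))) ^ 2 := by
        rw [Finset.sum_range_sub' (fun i => Dh xstar (x i))]
    _ ≤ Dh xstar (x 0) / η
          + η / (2 * αh) * ∑ t ∈ range T, (Nstar (f' t (x t))) ^ 2 := by
        have hnn := hDh_nonneg xstar (x T)
        have hdd : (Dh xstar (x 0) - Dh xstar (x T)) / η ≤ Dh xstar (x 0) / η :=
          (div_le_div_iff_of_pos_right hη).mpr (by linarith)
        linarith
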